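/- (Optimal variational covariance, Eqs. (8)–(10).) Let H be a real symmetric d×d matrix and β > 0 such that β·I − H is positive definite. Define, on the set of real symmetric positive-definite d×d matrices, F(Σ) = ½·tr(HΣ) − (β/2)·(tr(Σ) − log det(Σ) − d). Then Σ* := (I − (1/β)H)⁻¹ is positive definite, F(Σ) ≤ F(Σ*) for every positive-definite Σ with equality if and only if Σ = Σ*, and the optimal value is F(Σ*) = −(β/2)·log det(I − (1/β)H). -/

import Mathlib

open Matrix

variable {d : ℕ}

lemma myPosDef_smul {M : Matrix (Fin d) (Fin d) ℝ} (hM : M.PosDef) {c : ℝ} (hc : 0 < c) :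
    (c • M).PosDef := by
  refine PosDef.of_dotProduct_mulVec_pos ?_ (fun x hx => ?_)
  · unfold Matrix.IsHermitian
    rw [conjTranspose_smul, star_trivial, hM.1.eq]
  · rw [smul_mulVec, dotProduct_smul, smul_eq_mul]
    exact mul_pos hc (hM.dotProduct_mulVec_pos hx)

lemma myPosDef_conj {S B : Matrix (Fin d) (Fin d) ℝ} (hS : S.PosDef) (hB : B.IsHermitian)
    (hBu : IsUnit B) : (B * S * B).PosDef := by
  refine PosDef.of_dotProduct_mulVec_pos ?_ (fun x hx => ?_)
  · unfold Matrix.IsHermitian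
    rw [conjTranspose_mul, conjTranspose_mul, hB.eq, hS.1.eq, Matrix.mul_assoc]
  · have hy : B *ᵥ x ≠ 0 := by
      refine (Matrix.mulVec_injective_iff_isUnit.mpr hBu).ne_iff' ?_ |>.2 hx
      simp
    have : star x ⬝ᵥ (B * S * B) *ᵥ x = star (B *ᵥ x) ⬝ᵥ S *ᵥ (B *ᵥ x) := by
      rw [star_trivial, star_trivial, ← mulVec_mulVec, ← mulVec_mulVec,
        dotProduct_mulVec x B, ← mulVec_transpose]
      have hBt : Bᵀ = B := by
        ext i j
        have := congrFun (congrFun hB.eq i) j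
        simp only [conjTranspose_apply, star_trivial] at this
        rw [transpose_apply, this]
      rw [hBt]
    rw [this]
    exact hS.dotProduct_mulVec_pos hy

lemma myTrace_eq_sum_eigenvalues {M : Matrix (Fin d) (Fin d) ℝ} (hM : M.IsHermitian) :
    M.trace = ∑ i, hM.eigenvalues i := by
  conv_lhs => rw [hM.spectral_theorem]
  rw [Unitary.conjStarAlgAut_apply, trace_mul_cycle]
  rw [Matrix.mem_unitaryGroup_iff'.mp (Matrix.IsHermitian.eigenvectorUnitary hM).2, Matrix.one_mul]
  simp [trace_diagonal]

lemma myKey {M : Matrix (Fin d) (Fin d) ℝ} (hM : M.PosDef) :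
    (d : ℝ) ≤ M.trace - Real.log M.det ∧
      (M.trace - Real.log M.det = d ↔ M = 1) := by
  have hev := hM.eigenvalues_pos
  have htr : M.trace = ∑ i, hM.1.eigenvalues i := myTrace_eq_sum_eigenvalues hM.1
  have hdet : M.det = ∏ i, hM.1.eigenvalues i := by
    rw [hM.1.det_eq_prod_eigenvalues]; norm_num
  have hlog : Real.log M.det = ∑ i, Real.log (hM.1.eigenvalues i) := by
    rw [hdet, Real.log_prod]
    exact fun i _ => (hev i).ne'
  have hsum : M.trace - Real.log M.det - d
      = ∑ i, (hM.1.eigenvalues i - Real.log (hM.1.eigenvalues i) - 1) := by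
    rw [htr, hlog, Finset.sum_sub_distrib, Finset.sum_sub_distrib]
    simp
  have hterm : ∀ i ∈ Finset.univ, (0:ℝ) ≤ hM.1.eigenvalues i - Real.log (hM.1.eigenvalues i) - 1 := by
    intro i _
    have := Real.log_le_sub_one_of_pos (hev i)
    linarith
  have hge : (0:ℝ) ≤ M.trace - Real.log M.det - d := hsum ▸ Finset.sum_nonneg hterm
  refine ⟨by linarith, ?_, ?_⟩
  · intro heq
    have h0 : ∑ i, (hM.1.eigenvalues i - Real.log (hM.1.eigenvalues i) - 1) = 0 := by
      rw [← hsum, heq]; ring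
    have hall := (Finset.sum_eq_zero_iff_of_nonneg hterm).mp h0
    have hone : ∀ i, hM.1.eigenvalues i = 1 := by
      intro i
      by_contra hne
      have := Real.log_lt_sub_one_of_pos (hev i) hne
      have := hall i (Finset.mem_univ i)
      linarith
    have : M = 1 := by
      conv_lhs => rw [hM.1.spectral_theorem]
      have hdiag : Matrix.diagonal (RCLike.ofReal ∘ hM.1.eigenvalues)
          = (1 : Matrix (Fin d) (Fin d) ℝ) := by
        have : (RCLike.ofReal ∘ hM.1.eigenvalues : Fin d → ℝ) = fun _ => 1 :=
          funext fun i => by simp [hone i]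
        rw [this, Matrix.diagonal_one]
      rw [hdiag, Unitary.conjStarAlgAut_apply, Matrix.mul_one]
      exact Matrix.mem_unitaryGroup_iff.mp (Matrix.IsHermitian.eigenvectorUnitary hM.1).2
    exact this
  · rintro rfl
    simp

theorem optimal_variational_covariance {d : ℕ}
    (H : Matrix (Fin d) (Fin d) ℝ) (hH : H.IsSymm) (β : ℝ) (hβ : 0 < β)
    (hpos : (β • (1 : Matrix (Fin d) (Fin d) ℝ) - H).PosDef)
    (F : Matrix (Fin d) (Fin d) ℝ → ℝ)
    (hF : ∀ S, F S
      = (1 / 2) * (H * S).trace - (β / 2) * (S.trace - Real.log S.det - (d : ℝ)))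
    (Sstar : Matrix (Fin d) (Fin d) ℝ)
    (hSstar : Sstar = (1 - β⁻¹ • H)⁻¹) :
    Sstar.PosDef ∧
      (∀ S : Matrix (Fin d) (Fin d) ℝ, S.IsSymm → S.PosDef → F S ≤ F Sstar) ∧
      (∀ S : Matrix (Fin d) (Fin d) ℝ, S.IsSymm → S.PosDef → (F S = F Sstar ↔ S = Sstar)) ∧
      F Sstar = -(β / 2) * Real.log (1 - β⁻¹ • H).det := by
  set A : Matrix (Fin d) (Fin d) ℝ := 1 - β⁻¹ • H with hAdef
  have hA : A.PosDef := by
    have hAeq : A = β⁻¹ • (β • (1 : Matrix (Fin d) (Fin d) ℝ) - H) := by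
      rw [smul_sub, smul_smul, inv_mul_cancel₀ hβ.ne', one_smul]
    rw [hAeq]
    exact myPosDef_smul hpos (inv_pos.mpr hβ)
  have hAdet : 0 < A.det := hA.det_pos
  have hSstarPD : Sstar.PosDef := by rw [hSstar]; exact hA.inv
  -- rewrite F
  have hFG : ∀ S : Matrix (Fin d) (Fin d) ℝ,
      F S = -(β/2) * ((A * S).trace - Real.log S.det - (d : ℝ)) := by
    intro S
    rw [hF]
    have htr : (A * S).trace = S.trace - β⁻¹ * (H * S).trace := by
      rw [hAdef, Matrix.sub_mul, Matrix.one_mul, trace_sub, Matrix.smul_mul, trace_smul]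
      simp
    rw [htr]
    field_simp
    ring
  -- square root of A
  open scoped MatrixOrder in set B : Matrix (Fin d) (Fin d) ℝ := CFC.sqrt A with hBdef
  have hBB : B * B = A := by open scoped MatrixOrder in exact CFC.sqrt_mul_sqrt_self A hA.posSemidef.nonneg
  have hBH : B.IsHermitian := by open scoped MatrixOrder in exact (CFC.sqrt_nonneg A).posSemidef.1
  have hBdet : B.det ≠ 0 := by
    intro h0
    have : A.det = B.det * B.det := by rw [← hBB, det_mul]
    rw [this, h0] at hAdet
    simp at hAdet
  have hBdetU : IsUnit B.det := isUnit_iff_ne_zero.mpr hBdet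
  have hBu : IsUnit B := (Matrix.isUnit_iff_isUnit_det B).mpr hBdetU
  have hAdetU : IsUnit A.det := isUnit_iff_ne_zero.mpr hAdet.ne'
  have hBinv : B⁻¹ * B⁻¹ = A⁻¹ := by rw [← Matrix.mul_inv_rev, hBB]
  -- key claim
  have key : ∀ S : Matrix (Fin d) (Fin d) ℝ, S.PosDef →
      Real.log A.det ≤ (A * S).trace - Real.log S.det - (d : ℝ) ∧
      ((A * S).trace - Real.log S.det - (d : ℝ) = Real.log A.det ↔ S = A⁻¹) := by
    intro S hS
    set M : Matrix (Fin d) (Fin d) ℝ := B * S * B with hMdef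
    have hMPD : M.PosDef := myPosDef_conj hS hBH hBu
    have htrM : M.trace = (A * S).trace := by
      rw [hMdef, Matrix.trace_mul_cycle, hBB]
    have hdetM : M.det = A.det * S.det := by
      have hAd : A.det = B.det * B.det := by rw [← hBB, det_mul]
      rw [hMdef, det_mul, det_mul, hAd]; ring
    have hlogM : Real.log M.det = Real.log A.det + Real.log S.det := by
      rw [hdetM, Real.log_mul hAdet.ne' hS.det_pos.ne']
    have hGeq : (A * S).trace - Real.log S.det - (d : ℝ)
        = (M.trace - Real.log M.det - (d : ℝ)) + Real.log A.det := by
      rw [htrM, hlogM]; ring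
    obtain ⟨hge, hiff⟩ := myKey hMPD
    have hM1 : M = 1 ↔ S = A⁻¹ := by
      constructor
      · intro h1
        have hstep : B⁻¹ * (B * S * B) * B⁻¹ = B⁻¹ * 1 * B⁻¹ := by rw [← hMdef, h1]
        have hLHS : B⁻¹ * (B * S * B) * B⁻¹ = S := by
          rw [← Matrix.mul_assoc, ← Matrix.mul_assoc, Matrix.nonsing_inv_mul B hBdetU,
            Matrix.one_mul, Matrix.mul_assoc, Matrix.mul_nonsing_inv B hBdetU, Matrix.mul_one]
        rw [hLHS, Matrix.mul_one] at hstep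
        rw [hstep, hBinv]
      · intro h1
        rw [hMdef, h1, ← hBinv]
        simp only [Matrix.mul_assoc]
        rw [Matrix.nonsing_inv_mul B hBdetU, Matrix.mul_one, Matrix.mul_nonsing_inv B hBdetU]
    constructor
    · rw [hGeq]; linarith
    · rw [hGeq]
      constructor
      · intro h
        have : M.trace - Real.log M.det = (d : ℝ) := by linarith
        exact hM1.mp (hiff.mp this)
      · intro h
        have : M = 1 := hM1.mpr h
        have := hiff.mpr this
        linarith
  -- value at Sstar
  have hASstar : A * Sstar = 1 := by
    rw [hSstar, Matrix.mul_nonsing_inv A hAdetU]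
  have hSstarDet : Sstar.det = A.det⁻¹ := by rw [hSstar, det_nonsing_inv, Ring.inverse_eq_inv]
  have hFSstar : F Sstar = -(β/2) * Real.log A.det := by
    rw [hFG, hASstar, hSstarDet, Real.log_inv, trace_one]
    simp only [Fintype.card_fin]
    ring
  refine ⟨hSstarPD, ?_, ?_, hFSstar⟩
  · intro S _ hS
    rw [hFG, hFSstar]
    exact mul_le_mul_of_nonpos_left (key S hS).1 (by linarith)
  · intro S _ hS
    rw [hFG, hFSstar]
    constructor
    · intro h
      have hcan : (A * S).trace - Real.log S.det - (d : ℝ) = Real.log A.det :=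
        mul_left_cancel₀ (by intro h0; nlinarith [h0]) h
      rw [hSstar]
      exact (key S hS).2.mp hcan
    · intro h
      rw [h, hSstar, Matrix.mul_nonsing_inv A hAdetU, det_nonsing_inv, Ring.inverse_eq_inv,
        Real.log_inv, trace_one]
      simp only [Fintype.card_fin]
      ring
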